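/- For all real numbers a > 0, b, and 0 < β < 1, one has ||a+b|^β(a+b) − a^{β+1} − (1+β)a^β b| ≤ c(β)·min{|b|^{β+1}, a^{β−1}b²} for some constant c(β) depending only on β. -/

import Mathlib

open Real Set Filter

-- subadditivity of rpow on nonneg reals for exponent in [0,1]
private lemma aux_rpow_add_le {u v β : ℝ} (hu : 0 ≤ u) (hv : 0 ≤ v)
    (h0 : 0 ≤ β) (h1 : β ≤ 1) : (u + v) ^ β ≤ u ^ β + v ^ β := by
  have h := NNReal.coe_le_coe.2 (NNReal.rpow_add_le_add_rpow u.toNNReal v.toNNReal h0 h1)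
  rw [← Real.toNNReal_add hu hv] at h
  simpa [NNReal.coe_rpow, Real.coe_toNNReal, hu, hv, add_nonneg hu hv] using h

private lemma aux_holder {x y β : ℝ} (hx : 0 ≤ x) (hy : 0 ≤ y)
    (h0 : 0 ≤ β) (h1 : β ≤ 1) : |x ^ β - y ^ β| ≤ |x - y| ^ β := by
  have key : ∀ s t : ℝ, 0 ≤ s → s ≤ t → t ^ β - s ^ β ≤ (t - s) ^ β := by
    intro s t hs hst
    have := aux_rpow_add_le hs (sub_nonneg.2 hst) h0 h1
    rw [add_sub_cancel] at this
    linarith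
  rcases le_total y x with h | h
  · rw [abs_of_nonneg (sub_nonneg.2 (Real.rpow_le_rpow hy h h0)),
      abs_of_nonneg (sub_nonneg.2 h)]
    exact key y x hy h
  · rw [abs_sub_comm, abs_of_nonneg (sub_nonneg.2 (Real.rpow_le_rpow hx h h0)),
      abs_sub_comm, abs_of_nonneg (sub_nonneg.2 h)]
    exact key x y hx h

-- derivative of f t = |t|^β * t
private lemma aux_hasDerivAt {β : ℝ} (hβ : 0 < β) (t : ℝ) :
    HasDerivAt (fun t : ℝ => |t| ^ β * t) ((β + 1) * |t| ^ β) t := by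
  rcases lt_trichotomy t 0 with ht | rfl | ht
  · -- t < 0 : f x = -(-x)^(β+1) near t
    have h1 : HasDerivAt (fun x : ℝ => -((-x) ^ (β + 1))) ((β + 1) * (-t) ^ β) t := by
      have h2 : HasDerivAt (fun x : ℝ => x ^ (β + 1)) ((β + 1) * (-t) ^ (β + 1 - 1)) (-t) :=
        Real.hasDerivAt_rpow_const (Or.inl (by linarith))
      have h3 := (h2.comp t (hasDerivAt_neg t)).neg
      simpa [add_sub_cancel_right, Function.comp_def, Pi.neg_def] using h3
    have heq : (fun x : ℝ => |x| ^ β * x) =ᶠ[nhds t] fun x : ℝ => -((-x) ^ (β + 1)) := by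
      filter_upwards [Iio_mem_nhds ht] with x hx
      have hx' : x < 0 := hx
      rw [abs_of_neg hx', Real.rpow_add_one (neg_ne_zero.2 hx'.ne)]
      ring
    simpa [abs_of_neg ht] using h1.congr_of_eventuallyEq heq
  · -- t = 0
    rw [hasDerivAt_iff_tendsto_slope]
    simp only [abs_zero, Real.zero_rpow hβ.ne', mul_zero]
    have hc : Tendsto (fun h : ℝ => |h| ^ β) (nhdsWithin 0 {(0:ℝ)}ᶜ) (nhds 0) := by
      have : ContinuousAt (fun h : ℝ => |h| ^ β) 0 :=
        ContinuousAt.rpow_const (continuous_abs.continuousAt) (Or.inr hβ.le)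
      simpa [Real.zero_rpow hβ.ne'] using this.continuousWithinAt.tendsto
    apply hc.congr'
    filter_upwards [self_mem_nhdsWithin] with h hh
    have hh' : h ≠ 0 := hh
    simp only [slope_def_field, abs_zero, Real.zero_rpow hβ.ne', mul_zero, sub_zero]
    field_simp
  · -- t > 0
    have h1 : HasDerivAt (fun x : ℝ => x ^ (β + 1)) ((β + 1) * t ^ β) t := by
      have h2 : HasDerivAt (fun x : ℝ => x ^ (β + 1)) ((β + 1) * t ^ (β + 1 - 1)) t :=
        Real.hasDerivAt_rpow_const (Or.inl ht.ne')
      simpa [add_sub_cancel_right] using h2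
    have heq : (fun x : ℝ => |x| ^ β * x) =ᶠ[nhds t] fun x : ℝ => x ^ (β + 1) := by
      filter_upwards [Ioi_mem_nhds ht] with x hx
      have hx' : (0:ℝ) < x := hx
      rw [abs_of_pos hx', Real.rpow_add_one hx'.ne']
    simpa [abs_of_pos ht] using h1.congr_of_eventuallyEq heq

private lemma aux_taylor {f f' : ℝ → ℝ} {s : Set ℝ} (hs : Convex ℝ s) {x y C : ℝ}
    (hf : ∀ z ∈ s, HasDerivAt f (f' z) z)
    (bound : ∀ z ∈ s, |f' z - f' x| ≤ C) (hx : x ∈ s) (hy : y ∈ s) :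
    |f y - f x - f' x * (y - x)| ≤ C * |y - x| := by
  have key := hs.norm_image_sub_le_of_norm_hasFDerivWithin_le'
    (f' := fun z => ContinuousLinearMap.smulRight (1 : ℝ →L[ℝ] ℝ) (f' z))
    (φ := ContinuousLinearMap.smulRight (1 : ℝ →L[ℝ] ℝ) (f' x))
    (fun z hz => (hf z hz).hasFDerivAt.hasFDerivWithinAt)
    (fun z hz => by
      have h1 : ContinuousLinearMap.smulRight (1 : ℝ →L[ℝ] ℝ) (f' z)
          - ContinuousLinearMap.smulRight (1 : ℝ →L[ℝ] ℝ) (f' x)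
          = ContinuousLinearMap.smulRight (1 : ℝ →L[ℝ] ℝ) (f' z - f' x) := by
        ext u; simp [smul_sub, mul_sub]
      rw [h1, ContinuousLinearMap.norm_smulRight_apply]
      simpa [Real.norm_eq_abs] using bound z hz) hx hy
  simp only [ContinuousLinearMap.smulRight_apply, ContinuousLinearMap.one_apply,
    smul_eq_mul, Real.norm_eq_abs] at key
  calc |f y - f x - f' x * (y - x)| = |f y - f x - (y - x) * f' x| := by ring_nf
    _ ≤ C * |y - x| := key
theorem abs_rpow_mul_sub_taylor_le_of_lt_one (β : ℝ) (hβ0 : 0 < β) (hβ1 : β < 1) :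
    ∃ c : ℝ, 0 < c ∧ ∀ a b : ℝ, 0 < a →
      |(|a + b|) ^ β * (a + b) - a ^ (β + 1) - (1 + β) * a ^ β * b| ≤
        c * min (|b| ^ (β + 1)) (a ^ (β - 1) * b ^ 2) := by
  set F : ℝ → ℝ := fun t => |t| ^ β * t with hF
  set F' : ℝ → ℝ := fun t => (β + 1) * |t| ^ β with hF'
  refine ⟨4 * (β + 1), by positivity, ?_⟩
  intro a b ha
  have hb2 : (0:ℝ) ≤ b ^ 2 := sq_nonneg b
  have hβ1' : (0:ℝ) < β + 1 := by linarith
  rcases eq_or_ne b 0 with rfl | hb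
  · simp [abs_of_pos ha, Real.rpow_add_one ha.ne', Real.zero_rpow hβ1'.ne',
      Real.rpow_natCast]
  have hbpos : 0 < |b| := abs_pos.2 hb
  -- rewrite LHS
  have hLHS : (|a + b|) ^ β * (a + b) - a ^ (β + 1) - (1 + β) * a ^ β * b
      = F (a + b) - F a - F' a * b := by
    simp only [hF, hF']
    rw [abs_of_pos ha, Real.rpow_add_one ha.ne']
    ring
  rw [hLHS]
  -- distance bound on the interval
  have hdist : ∀ z ∈ uIcc a (a + b), |z - a| ≤ |b| := by
    intro z hz
    rcases Set.mem_uIcc.1 hz with ⟨h1, h2⟩ | ⟨h1, h2⟩ <;>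
      refine abs_le.2 ⟨?_, ?_⟩ <;>
      [skip; skip; skip; skip] <;>
      first
        | linarith [neg_abs_le b, le_abs_self b]
  have hderiv : ∀ z ∈ uIcc a (a + b), HasDerivAt F (F' z) z :=
    fun z _ => aux_hasDerivAt hβ0 z
  have haL : a ∈ uIcc a (a + b) := Set.left_mem_uIcc
  have haR : a + b ∈ uIcc a (a + b) := Set.right_mem_uIcc
  have hbb : |b| * |b| = b ^ 2 := by rw [abs_mul_abs_self]; ring
  have hrw : |b| ^ (β + 1) = |b| ^ β * |b| := Real.rpow_add_one hbpos.ne' β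
  -- Bound 1 : |R| ≤ (β+1) * |b|^(β+1)
  have bound1 : |F (a + b) - F a - F' a * b| ≤ (β + 1) * |b| ^ (β + 1) := by
    have hb1 : ∀ z ∈ uIcc a (a + b), |F' z - F' a| ≤ (β + 1) * |b| ^ β := by
      intro z hz
      have h1 : |F' z - F' a| = (β + 1) * |(|z|) ^ β - (|a|) ^ β| := by
        simp only [hF', ← mul_sub, abs_mul, abs_of_pos hβ1']
      rw [h1]
      have h2 : |(|z|) ^ β - (|a|) ^ β| ≤ (|(|z|) - (|a|)|) ^ β :=
        aux_holder (abs_nonneg z) (abs_nonneg a) hβ0.le hβ1.le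
      have h3 : (|(|z|) - (|a|)|) ^ β ≤ |b| ^ β :=
        Real.rpow_le_rpow (abs_nonneg _)
          ((abs_abs_sub_abs_le_abs_sub z a).trans (hdist z hz)) hβ0.le
      exact mul_le_mul_of_nonneg_left (h2.trans h3) hβ1'.le
    have h := aux_taylor (convex_uIcc a (a + b)) hderiv hb1 haL haR
    rw [add_sub_cancel_left] at h
    calc |F (a + b) - F a - F' a * b| ≤ (β + 1) * |b| ^ β * |b| := h
      _ = (β + 1) * |b| ^ (β + 1) := by rw [hrw]; ring
  have h2a : (0:ℝ) ≤ a ^ (β - 1) := Real.rpow_nonneg ha.le _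
  have hhalf : (1:ℝ)/2 ≤ (2:ℝ) ^ (β - 1) := by
    have := Real.rpow_le_rpow_of_exponent_le (one_le_two) (by linarith : (-1:ℝ) ≤ β - 1)
    rw [Real.rpow_neg_one] at this
    linarith
  have h2pos : (0:ℝ) < (2:ℝ) ^ (β - 1) := Real.rpow_pos_of_pos two_pos _
  rcases le_or_gt (|b|) (a / 2) with hba | hba
  · -- case |b| ≤ a/2 : second-order bound
    have hmin : a ^ (β - 1) * b ^ 2 ≤ |b| ^ (β + 1) := by
      have h1 : a ^ (β - 1) ≤ |b| ^ (β - 1) :=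
        Real.rpow_le_rpow_of_nonpos hbpos (by linarith) (by linarith)
      have h2 : |b| ^ (β - 1) * b ^ 2 = |b| ^ (β + 1) := by
        rw [← hbb, show β + 1 = β - 1 + 1 + 1 by ring, Real.rpow_add_one hbpos.ne',
          Real.rpow_add_one hbpos.ne']
        ring
      calc a ^ (β - 1) * b ^ 2 ≤ |b| ^ (β - 1) * b ^ 2 :=
            mul_le_mul_of_nonneg_right h1 hb2
        _ = |b| ^ (β + 1) := h2
    rw [min_eq_right hmin]
    have hA : (a / 2) ^ (β - 1) ≤ 2 * a ^ (β - 1) := by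
      rw [Real.div_rpow ha.le (by norm_num)]
      rw [div_le_iff₀ h2pos]
      calc a ^ (β - 1) = 2 * a ^ (β - 1) * (1/2) := by ring
        _ ≤ 2 * a ^ (β - 1) * (2:ℝ) ^ (β - 1) :=
            mul_le_mul_of_nonneg_left hhalf (by positivity)
    have hb1 : ∀ z ∈ uIcc a (a + b),
        |F' z - F' a| ≤ (β + 1) * (β * (a / 2) ^ (β - 1) * |b|) := by
      intro z hz
      have hza := hdist z hz
      have hz1 : a / 2 ≤ z := by
        have := abs_le.1 hza
        linarith [this.1]
      have hz2 : z ≤ a + |b| := by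
        have := abs_le.1 hza
        linarith [this.2]
      have hzpos : 0 < z := by linarith
      have key := Convex.norm_image_sub_le_of_norm_hasDerivWithin_le
        (s := Icc (a/2) (a + |b|)) (x := a) (y := z) (f := fun t => t ^ β)
        (f' := fun t => β * t ^ (β - 1))
        (fun t htm => (Real.hasDerivAt_rpow_const
          (Or.inl (by have := htm.1; intro h; rw [h] at this; linarith))).hasDerivWithinAt)
        (fun t htm => by
          have htpos : 0 < t := lt_of_lt_of_le (by linarith) htm.1
          rw [Real.norm_eq_abs, abs_mul, abs_of_pos hβ0,
            abs_of_pos (Real.rpow_pos_of_pos htpos _)]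
          exact mul_le_mul_of_nonneg_left
            (Real.rpow_le_rpow_of_nonpos (by linarith) htm.1 (by linarith)) hβ0.le)
        (convex_Icc _ _)
        ⟨by linarith, by linarith [abs_nonneg b]⟩
        ⟨hz1, hz2⟩
      simp only [Real.norm_eq_abs] at key
      have h1 : |F' z - F' a| = (β + 1) * |z ^ β - a ^ β| := by
        simp only [hF', abs_of_pos ha, abs_of_pos hzpos, ← mul_sub, abs_mul,
          abs_of_pos hβ1']
      rw [h1]
      refine mul_le_mul_of_nonneg_left ?_ hβ1'.le
      calc |z ^ β - a ^ β| ≤ β * (a/2) ^ (β - 1) * |z - a| := key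
        _ ≤ β * (a/2) ^ (β - 1) * |b| :=
            mul_le_mul_of_nonneg_left hza (by positivity)
    have h := aux_taylor (convex_uIcc a (a + b)) hderiv hb1 haL haR
    rw [add_sub_cancel_left] at h
    have hc1 : (β + 1) * β * 2 ≤ 4 * (β + 1) := by nlinarith
    calc |F (a + b) - F a - F' a * b|
        ≤ (β + 1) * (β * (a/2) ^ (β - 1) * |b|) * |b| := h
      _ = (β + 1) * β * (a/2) ^ (β - 1) * b ^ 2 := by rw [← hbb]; ring
      _ ≤ (β + 1) * β * (2 * a ^ (β - 1)) * b ^ 2 := by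
          refine mul_le_mul_of_nonneg_right ?_ hb2
          exact mul_le_mul_of_nonneg_left hA (by positivity)
      _ = ((β + 1) * β * 2) * (a ^ (β - 1) * b ^ 2) := by ring
      _ ≤ (4 * (β + 1)) * (a ^ (β - 1) * b ^ 2) :=
          mul_le_mul_of_nonneg_right hc1 (mul_nonneg h2a hb2)
  · -- case |b| > a/2 : first-order bound
    have hrp : (0:ℝ) ≤ |b| ^ (β + 1) := Real.rpow_nonneg (abs_nonneg b) _
    have hmin : (1/2) * |b| ^ (β + 1) ≤ min (|b| ^ (β + 1)) (a ^ (β - 1) * b ^ 2) := by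
      refine le_min (by linarith) ?_
      have h1 : (2 * |b|) ^ (β - 1) ≤ a ^ (β - 1) :=
        Real.rpow_le_rpow_of_nonpos ha (by linarith) (by linarith)
      have h2 : (2 * |b|) ^ (β - 1) = 2 ^ (β - 1) * |b| ^ (β - 1) :=
        Real.mul_rpow (by norm_num) (abs_nonneg b)
      have h3 : |b| ^ (β - 1) * b ^ 2 = |b| ^ (β + 1) := by
        rw [← hbb, show β + 1 = β - 1 + 1 + 1 by ring, Real.rpow_add_one hbpos.ne',
          Real.rpow_add_one hbpos.ne']
        ring
      have h4 : (1/2) * |b| ^ (β - 1) ≤ 2 ^ (β - 1) * |b| ^ (β - 1) :=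
        mul_le_mul_of_nonneg_right hhalf (Real.rpow_nonneg (abs_nonneg b) _)
      calc (1/2) * |b| ^ (β + 1) = (1/2) * |b| ^ (β - 1) * b ^ 2 := by rw [← h3]; ring
        _ ≤ (2 * |b|) ^ (β - 1) * b ^ 2 := by
            rw [h2]; exact mul_le_mul_of_nonneg_right h4 hb2
        _ ≤ a ^ (β - 1) * b ^ 2 := mul_le_mul_of_nonneg_right h1 hb2
    calc |F (a + b) - F a - F' a * b| ≤ (β + 1) * |b| ^ (β + 1) := bound1
      _ ≤ 4 * (β + 1) * ((1/2) * |b| ^ (β + 1)) := by nlinarith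
      _ ≤ 4 * (β + 1) * min (|b| ^ (β + 1)) (a ^ (β - 1) * b ^ 2) :=
          mul_le_mul_of_nonneg_left hmin (by positivity)
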